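/- For all n, all τ with c₁√n ≤ τ ≤ c₂ n^{3/4}, and all ℓ ≤ c₃ √n (for appropriate constants c₁, c₂, c₃), the tail probability over uniform x ∈ {±1}^{n+ℓ} that Σ x_i > τ is at most a constant multiple of the tail probability over uniform x ∈ {±1}^n that Σ x_i > τ. -/

import Mathlib

set_option maxHeartbeats 1600000

open Finset

/-- The probability that a sum of `m` independent uniform `±1` signs exceeds `τ`. -/
noncomputable def tailProb (m : ℕ) (τ : ℝ) : ℝ :=
  (((Fintype.piFinset fun _ : Fin m => ({-1, 1} : Finset ℝ)).filter
      (fun x => τ < ∑ i, x i)).card : ℝ) / 2 ^ m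

lemma sum_pm (m : ℕ) (x : Fin m → ℝ) (hx : ∀ i, x i = -1 ∨ x i = 1) :
    ∑ i, x i = 2 * ((univ.filter (fun i => x i = 1)).card : ℝ) - m := by
  have h := Finset.sum_filter_add_sum_filter_not (univ : Finset (Fin m)) (fun i => x i = 1) x
  have h1 : ∑ i ∈ univ.filter (fun i => x i = 1), x i
      = ((univ.filter (fun i => x i = 1)).card : ℝ) := by
    rw [Finset.sum_congr rfl (fun i hi => (Finset.mem_filter.mp hi).2)]
    simp
  have h2 : ∑ i ∈ univ.filter (fun i => ¬ x i = 1), x i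
      = -(((univ.filter (fun i => ¬ x i = 1)).card : ℝ)) := by
    have : ∑ i ∈ univ.filter (fun i => ¬ x i = 1), x i
        = ∑ _i ∈ univ.filter (fun i => ¬ x i = 1), (-1 : ℝ) := by
      refine Finset.sum_congr rfl (fun i hi => ?_)
      rcases hx i with h' | h'
      · exact h'
      · exact absurd h' (Finset.mem_filter.mp hi).2
    rw [this, Finset.sum_const]
    simp
  have hcard : (univ.filter (fun i => x i = 1)).card
      + (univ.filter (fun i => ¬ x i = 1)).card = m := by
    rw [Finset.card_filter_add_card_filter_not]
    simp
  have hc : ((univ.filter (fun i => ¬ x i = 1)).card : ℝ)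
      = m - ((univ.filter (fun i => x i = 1)).card : ℝ) := by
    have := congrArg (fun z : ℕ => (z : ℝ)) hcard
    push_cast at this
    linarith
  rw [h1, h2, hc] at h
  linarith [h]

lemma tailProb_eq (m : ℕ) (τ : ℝ) :
    tailProb m τ = (∑ k ∈ (range (m+1)).filter (fun k : ℕ => τ < 2*(k:ℝ) - m),
      (m.choose k : ℝ)) / 2 ^ m := by
  unfold tailProb
  have hcard : ((Fintype.piFinset fun _ : Fin m => ({-1, 1} : Finset ℝ)).filter
      (fun x => τ < ∑ i, x i)).card
      = ((univ : Finset (Fin m)).powerset.filter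
          (fun s => τ < 2*(s.card:ℝ) - m)).card := by
    apply Finset.card_bij (fun x _ => univ.filter (fun i => x i = 1))
    · intro x hx
      rw [Finset.mem_filter] at hx ⊢
      obtain ⟨hx1, hx2⟩ := hx
      have hpm : ∀ i, x i = -1 ∨ x i = 1 := by
        intro i; have := Fintype.mem_piFinset.mp hx1 i; simpa using this
      refine ⟨Finset.mem_powerset.mpr (Finset.subset_univ _), ?_⟩
      rw [← sum_pm m x hpm]; exact hx2
    · intro x hx y hy hxy
      rw [Finset.mem_filter] at hx hy
      have hpmx : ∀ i, x i = -1 ∨ x i = 1 := by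
        intro i; have := Fintype.mem_piFinset.mp hx.1 i; simpa using this
      have hpmy : ∀ i, y i = -1 ∨ y i = 1 := by
        intro i; have := Fintype.mem_piFinset.mp hy.1 i; simpa using this
      funext i
      have hiff : (x i = 1) ↔ (y i = 1) := by
        constructor
        · intro h
          have : i ∈ univ.filter (fun i => x i = 1) := by simp [h]
          rw [hxy] at this; exact (Finset.mem_filter.mp this).2
        · intro h
          have : i ∈ univ.filter (fun i => y i = 1) := by simp [h]
          rw [← hxy] at this; exact (Finset.mem_filter.mp this).2
      rcases hpmx i with h | h
      · rcases hpmy i with h' | h'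
        · rw [h, h']
        · exfalso
          have : x i = 1 := hiff.mpr h'
          rw [h] at this; norm_num at this
      · rw [h, hiff.mp h]
    · intro s hs
      rw [Finset.mem_filter] at hs
      refine ⟨fun i => if i ∈ s then 1 else -1, ?_, ?_⟩
      · rw [Finset.mem_filter]
        constructor
        · rw [Fintype.mem_piFinset]; intro i; by_cases h : i ∈ s <;> simp [h]
        · have hpm : ∀ i, (if i ∈ s then (1:ℝ) else -1) = -1 ∨ (if i ∈ s then (1:ℝ) else -1) = 1 := by
            intro i; by_cases h : i ∈ s <;> simp [h]
          rw [sum_pm m _ hpm]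
          have hfil : univ.filter (fun i => (if i ∈ s then (1:ℝ) else -1) = 1) = s := by
            ext i; by_cases h : i ∈ s <;> simp [h]; norm_num
          rw [hfil]; exact hs.2
      · ext i; by_cases h : i ∈ s <;> simp [h] <;> norm_num
  have hm : (univ : Finset (Fin m)).card = m := by simp
  have hps : (((univ : Finset (Fin m)).powerset.filter
      (fun s => τ < 2*(s.card:ℝ) - m)).card : ℝ)
      = ∑ k ∈ (range (m+1)).filter (fun k : ℕ => τ < 2*(k:ℝ) - m), (m.choose k : ℝ) := by
    rw [Finset.card_filter]
    push_cast
    rw [Finset.sum_powerset (univ : Finset (Fin m))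
      (fun s => if τ < 2*(s.card:ℝ) - m then (1:ℝ) else 0), hm]
    have hinner : ∀ k ∈ range (m+1),
        (∑ s ∈ Finset.powersetCard k (univ : Finset (Fin m)),
          (if τ < 2*(s.card:ℝ) - m then (1:ℝ) else 0))
        = (if τ < 2*(k:ℝ) - m then (m.choose k : ℝ) else 0) := by
      intro k _
      have : ∀ s ∈ Finset.powersetCard k (univ : Finset (Fin m)),
          (if τ < 2*(s.card:ℝ) - m then (1:ℝ) else 0)
          = (if τ < 2*(k:ℝ) - m then (1:ℝ) else 0) := by
        intro s hs
        rw [(Finset.mem_powersetCard.mp hs).2]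
      rw [Finset.sum_congr rfl this, Finset.sum_const, Finset.card_powersetCard, hm]
      by_cases h : τ < 2*(k:ℝ) - m <;> simp [h]
    rw [Finset.sum_congr rfl hinner, ← Finset.sum_filter]
  rw [hcard, hps]

-- H1
lemma exp_neg_two_le {x : ℝ} (h0 : 0 ≤ x) (h1 : x ≤ 1/2) : Real.exp (-(2*x)) ≤ 1 - x := by
  have hE := Real.add_one_le_exp (2*x)
  have hpos := Real.exp_pos (2*x)
  have key : Real.exp (-(2*x)) * Real.exp (2*x) = 1 := by
    rw [← Real.exp_add]; ring_nf; exact Real.exp_zero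
  have h2 : (1:ℝ) ≤ (1-x) * Real.exp (2*x) := by nlinarith
  nlinarith

-- L1
lemma choose_step (m j : ℕ) :
    (m+2).choose (j+1) * ((j+1) * (m+1-j)) = m.choose j * ((m+1)*(m+2)) := by
  have a := Nat.choose_mul_succ_eq (m+1) (j+1)
  have b := Nat.add_one_mul_choose_eq m j
  have h2 : m+1+1-(j+1) = m+1-j := by omega
  rw [h2] at a
  calc (m+2).choose (j+1) * ((j+1)*(m+1-j))
      = ((m+2).choose (j+1) * (m+1-j)) * (j+1) := by ring
    _ = ((m+1).choose (j+1) * (m+1+1)) * (j+1) := by rw [← a]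
    _ = ((m+1).choose (j+1) * (j+1)) * (m+2) := by ring
    _ = ((m+1) * m.choose j) * (m+2) := by rw [← b]
    _ = m.choose j * ((m+1)*(m+2)) := by ring

-- L2
lemma choose_grow (n k : ℕ) (hk : k ≤ n) (hnk : n ≤ 2*k) (hn : 1 ≤ n)
    (hd : (2*(k:ℝ) - n)^2 ≤ (n:ℝ)^2/2) (h : ℕ) :
    ((n+2*h).choose (k+h) : ℝ)
      ≤ (4*Real.exp (2*((2*(k:ℝ)-n)^2/(n:ℝ)^2)))^h * (n.choose k) := by
  set x : ℝ := (2*(k:ℝ)-n)^2/(n:ℝ)^2 with hxdef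
  have hn0 : (0:ℝ) < n := by exact_mod_cast hn
  have hx0 : 0 ≤ x := div_nonneg (sq_nonneg _) (by positivity)
  have hx1 : x ≤ 1/2 := by
    rw [hxdef, div_le_iff₀ (by positivity)]
    nlinarith
  induction h with
  | zero => simp
  | succ h ih =>
    have hjm : k + h ≤ n + 2*h := by omega
    set m := n + 2*h with hmdef
    set j := k + h with hjdef
    have hstep := choose_step m j
    have hj1m : j ≤ m + 1 := by omega
    have hcastsub : ((m+1-j : ℕ) : ℝ) = (m:ℝ)+1-j := by
      rw [Nat.cast_sub (by omega)]; push_cast; ring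
    have hcast : ((m+2).choose (j+1) : ℝ) * (((j:ℝ)+1) * ((m:ℝ)+1-j))
        = (m.choose j : ℝ) * (((m:ℝ)+1)*((m:ℝ)+2)) := by
      have := congrArg (fun z : ℕ => (z:ℝ)) hstep
      push_cast at this
      rw [hcastsub] at this
      convert this using 2 <;> push_cast <;> ring
    have hd' : (2*(j:ℝ) - m) = 2*(k:ℝ) - n := by push_cast [hmdef, hjdef]; ring
    have hP : (0:ℝ) < ((j:ℝ)+1) * ((m:ℝ)+1-j) := by
      have : (j:ℝ) ≤ m := by exact_mod_cast hjm
      nlinarith [Nat.cast_nonneg (α := ℝ) j]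
    have h4P : 4 * (((j:ℝ)+1) * ((m:ℝ)+1-j)) = ((m:ℝ)+2)^2 - (2*(k:ℝ)-n)^2 := by
      rw [← hd']; ring
    -- Q ≤ R * P
    have hEx : 1 ≤ (1-x) * Real.exp (2*x) := by
      have hE := exp_neg_two_le hx0 hx1
      have key : Real.exp (-(2*x)) * Real.exp (2*x) = 1 := by
        rw [← Real.exp_add]; ring_nf; exact Real.exp_zero
      nlinarith [Real.exp_pos (2*x)]
    have hmn : (n:ℝ) ≤ (m:ℝ) := by
      have : n ≤ m := by omega
      exact_mod_cast this
    have hd2x : (2*(k:ℝ)-n)^2 = x * (n:ℝ)^2 := by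
      rw [hxdef]; field_simp
    have hQR : ((m:ℝ)+1)*((m:ℝ)+2)
        ≤ (4*Real.exp (2*x)) * (((j:ℝ)+1) * ((m:ℝ)+1-j)) := by
      have e1 : (4*Real.exp (2*x)) * (((j:ℝ)+1) * ((m:ℝ)+1-j))
          = Real.exp (2*x) * (((m:ℝ)+2)^2 - (2*(k:ℝ)-n)^2) := by
        rw [← h4P]; ring
      rw [e1]
      have hn2m : (n:ℝ)^2 ≤ ((m:ℝ)+2)^2 := by nlinarith
      have hxm : x*(n:ℝ)^2 ≤ x*((m:ℝ)+2)^2 := mul_le_mul_of_nonneg_left hn2m hx0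
      have hsub : (1-x)*((m:ℝ)+2)^2 ≤ ((m:ℝ)+2)^2 - (2*(k:ℝ)-n)^2 := by
        rw [hd2x]; linarith
      have hEp := Real.exp_pos (2*x)
      have hm0 : (0:ℝ) ≤ (m:ℝ) := Nat.cast_nonneg _
      have c1 : ((m:ℝ)+1)*((m:ℝ)+2) ≤ ((m:ℝ)+2)^2 := by nlinarith
      have c2 : ((m:ℝ)+2)^2 ≤ Real.exp (2*x) * ((1-x)*((m:ℝ)+2)^2) := by
        have := mul_le_mul_of_nonneg_right hEx (sq_nonneg ((m:ℝ)+2))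
        calc ((m:ℝ)+2)^2 = 1 * ((m:ℝ)+2)^2 := (one_mul _).symm
          _ ≤ (1-x) * Real.exp (2*x) * ((m:ℝ)+2)^2 := this
          _ = Real.exp (2*x) * ((1-x)*((m:ℝ)+2)^2) := by ring
      have c3 : Real.exp (2*x) * ((1-x)*((m:ℝ)+2)^2)
          ≤ Real.exp (2*x) * (((m:ℝ)+2)^2 - (2*(k:ℝ)-n)^2) :=
        mul_le_mul_of_nonneg_left hsub (le_of_lt hEp)
      linarith
    -- conclude step
    have hCm : (0:ℝ) ≤ (m.choose j : ℝ) := Nat.cast_nonneg _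
    have hstep' : ((m+2).choose (j+1) : ℝ) ≤ (4*Real.exp (2*x)) * (m.choose j : ℝ) := by
      have h1 : ((m+2).choose (j+1) : ℝ) * (((j:ℝ)+1) * ((m:ℝ)+1-j))
          ≤ ((4*Real.exp (2*x)) * (m.choose j : ℝ)) * (((j:ℝ)+1) * ((m:ℝ)+1-j)) := by
        rw [hcast]
        calc (m.choose j : ℝ) * (((m:ℝ)+1)*((m:ℝ)+2))
            ≤ (m.choose j : ℝ) * ((4*Real.exp (2*x)) * (((j:ℝ)+1) * ((m:ℝ)+1-j))) :=
              mul_le_mul_of_nonneg_left hQR hCm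
          _ = ((4*Real.exp (2*x)) * (m.choose j : ℝ)) * (((j:ℝ)+1) * ((m:ℝ)+1-j)) := by ring
      exact le_of_mul_le_mul_right h1 hP
    have hidx1 : n + 2*(h+1) = m + 2 := by omega
    have hidx2 : k + (h+1) = j + 1 := by omega
    rw [hidx1, hidx2, pow_succ]
    calc ((m+2).choose (j+1) : ℝ) ≤ (4*Real.exp (2*x)) * (m.choose j : ℝ) := hstep'
      _ ≤ (4*Real.exp (2*x)) * ((4*Real.exp (2*x))^h * (n.choose k : ℝ)) := by
          apply mul_le_mul_of_nonneg_left ih (by positivity)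
      _ = (4*Real.exp (2*x))^h * (4*Real.exp (2*x)) * (n.choose k : ℝ) := by ring

-- L3
lemma choose_shift (n k ℓ : ℕ) (hk : k ≤ n) (hnk : n ≤ 2*k) (hn : 1 ≤ n)
    (hd : (2*(k:ℝ) - n)^2 ≤ (n:ℝ)^2/2) :
    ((n+ℓ).choose (k+ℓ/2) : ℝ)
      ≤ 2^ℓ * (2*Real.exp (2*((2*(k:ℝ)-n)^2/(n:ℝ)^2) * ((ℓ/2 : ℕ)+1))) * (n.choose k) := by
  set x : ℝ := (2*(k:ℝ)-n)^2/(n:ℝ)^2 with hxdef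
  have hx0 : 0 ≤ x := div_nonneg (sq_nonneg _) (by positivity)
  set h : ℕ := ℓ/2 with hhdef
  have hcases : ℓ = 2*h ∨ ℓ = 2*h+1 := by omega
  have hbase := choose_grow n k hk hnk hn hd
  rcases hcases with hc | hc
  · have := hbase h
    rw [hc]
    have e4 : ((4:ℝ)*Real.exp (2*x))^h = 2^(2*h) * Real.exp (2*x*h) := by
      rw [mul_pow, ← Real.exp_nat_mul]
      have h4 : ((4:ℝ))^h = 2^(2*h) := by rw [pow_mul]; norm_num
      rw [h4, mul_comm ((h:ℝ)) (2*x)]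
    calc ((n+2*h).choose (k+h) : ℝ) ≤ (4*Real.exp (2*x))^h * (n.choose k) := this
      _ = 2^(2*h) * Real.exp (2*x*h) * (n.choose k) := by rw [e4]
      _ ≤ 2^(2*h) * (2*Real.exp (2*x*((h:ℝ)+1))) * (n.choose k) := by
          apply mul_le_mul_of_nonneg_right _ (Nat.cast_nonneg _)
          apply mul_le_mul_of_nonneg_left _ (by positivity)
          calc Real.exp (2*x*h) ≤ Real.exp (2*x*((h:ℝ)+1)) := by
                apply Real.exp_le_exp.mpr; nlinarith
            _ ≤ 2*Real.exp (2*x*((h:ℝ)+1)) := by nlinarith [Real.exp_pos (2*x*((h:ℝ)+1))]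
  · -- odd case : Pascal then grow with h+1
    have hpas : ((n+ℓ).choose (k+h) : ℕ) ≤ (n+2*(h+1)).choose (k+(h+1)) := by
      have he : n+2*(h+1) = (n+ℓ) + 1 := by omega
      have he2 : k+(h+1) = (k+h) + 1 := by omega
      rw [he, he2, Nat.choose_succ_succ]
      exact Nat.le_add_right _ _
    have hg := hbase (h+1)
    calc ((n+ℓ).choose (k+h) : ℝ) ≤ ((n+2*(h+1)).choose (k+(h+1)) : ℝ) := by exact_mod_cast hpas
      _ ≤ (4*Real.exp (2*x))^(h+1) * (n.choose k) := hg
      _ = 2^ℓ * (2*Real.exp (2*x*((h:ℝ)+1))) * (n.choose k) := by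
          have e5 : ((4:ℝ)*Real.exp (2*x))^(h+1) = 2^ℓ * (2*Real.exp (2*x*((h:ℝ)+1))) := by
            rw [mul_pow, ← Real.exp_nat_mul, hc]
            have h4 : ((4:ℝ))^(h+1) = 2^(2*h+1) * 2 := by
              have : ((4:ℝ))^(h+1) = 2^(2*(h+1)) := by rw [pow_mul]; norm_num
              rw [this]; ring
            rw [h4]
            push_cast
            ring_nf
          rw [e5]

-- L4
lemma choose_geom (n q : ℕ) (ρ : ℝ) (hρ : 0 ≤ ρ) :
    ∀ t : ℕ, (∀ j : ℕ, q ≤ j → j < q + t → ρ * ((j:ℝ)+1) ≤ (n:ℝ) - j) →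
    (n.choose q : ℝ) * ρ^t ≤ n.choose (q+t) := by
  intro t
  induction t with
  | zero => simp
  | succ t ih =>
    intro hyp
    have ih' := ih (fun j hj hj' => hyp j hj (by omega))
    have hj := hyp (q+t) (by omega) (by omega)
    have hjn : q + t ≤ n := by
      by_contra hcon
      push_neg at hcon
      have h1 : (n:ℝ) - (q+t) < 0 := by
        have : (n:ℝ) < ((q+t : ℕ):ℝ) := by exact_mod_cast hcon
        push_cast at this ⊢
        linarith
      have h2 : 0 ≤ ρ * (((q+t:ℕ):ℝ)+1) := mul_nonneg hρ (by positivity)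
      push_cast at hj h2
      linarith
    have hrec := Nat.choose_succ_right_eq n (q+t)
    have hcast : (n.choose (q+t+1) : ℝ) * ((q+t:ℝ)+1) = (n.choose (q+t) : ℝ) * ((n:ℝ) - (q+t)) := by
      have := congrArg (fun z : ℕ => (z:ℝ)) hrec
      push_cast [Nat.cast_sub hjn] at this
      convert this using 2 <;> push_cast <;> ring
    have hpos : (0:ℝ) < (q+t:ℝ)+1 := by positivity
    have key : (n.choose q : ℝ) * ρ^(t+1) * ((q+t:ℝ)+1) ≤ (n.choose (q+t+1) : ℝ) * ((q+t:ℝ)+1) := by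
      rw [hcast]
      have e1 : (n.choose q : ℝ) * ρ^(t+1) * ((q+t:ℝ)+1)
          = ((n.choose q : ℝ) * ρ^t) * (ρ * ((q+t:ℝ)+1)) := by ring
      rw [e1]
      have hc0 : (0:ℝ) ≤ (n.choose q : ℝ) * ρ^t := by positivity
      have hjcast : ρ * ((q+t:ℝ)+1) ≤ (n:ℝ) - (q+t:ℝ) := by
        push_cast at hj; push_cast; linarith
      calc ((n.choose q : ℝ) * ρ^t) * (ρ * ((q+t:ℝ)+1))
          ≤ ((n.choose q : ℝ) * ρ^t) * ((n:ℝ) - (q+t:ℝ)) := by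
            apply mul_le_mul_of_nonneg_left hjcast hc0
        _ ≤ (n.choose (q+t) : ℝ) * ((n:ℝ) - (q+t:ℝ)) := by
            apply mul_le_mul_of_nonneg_right ih'
            have : ((q+t:ℕ):ℝ) ≤ n := by exact_mod_cast hjn
            push_cast at this; linarith
    exact le_of_mul_le_mul_right key hpos

-- L5
lemma middle_lower (n : ℕ) : (2:ℝ)^n ≤ ((n:ℝ)+1) * (n.choose (n/2)) := by
  have h : 2^n ≤ (n+1) * (n.choose (n/2)) := by
    rw [← Nat.sum_range_choose]
    calc ∑ i ∈ Finset.range (n+1), n.choose i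
        ≤ ∑ _i ∈ Finset.range (n+1), n.choose (n/2) :=
          Finset.sum_le_sum (fun i _ => Nat.choose_le_middle i n)
      _ = (n+1) * (n.choose (n/2)) := by rw [Finset.sum_const, Finset.card_range]; ring
  exact_mod_cast h

-- H2
lemma exp_add_exp_neg_le (u : ℝ) (h0 : 0 ≤ u) (h1 : u ≤ 1) :
    Real.exp u + Real.exp (-u) ≤ 2 + 2*u^2 := by
  have habs : |u| ≤ 1 := by rw [abs_of_nonneg h0]; exact h1
  have habs' : |(-u)| ≤ 1 := by rw [abs_neg]; exact habs
  have b1 := Real.exp_bound habs (n := 2) (by norm_num)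
  have b2 := Real.exp_bound habs' (n := 2) (by norm_num)
  have e1 : ∑ m ∈ range 2, u ^ m / (m.factorial : ℝ) = 1 + u := by
    simp [Finset.sum_range_succ]
  have e2 : ∑ m ∈ range 2, (-u) ^ m / (m.factorial : ℝ) = 1 - u := by
    simp [Finset.sum_range_succ]
    ring
  rw [e1] at b1
  rw [e2] at b2
  have hb1 : Real.exp u - (1+u) ≤ |u|^2 * ((2:ℕ).succ / ((2:ℕ).factorial * (2:ℕ))) :=
    le_trans (le_abs_self _) b1
  have hb2 : Real.exp (-u) - (1-u) ≤ |(-u)|^2 * ((2:ℕ).succ / ((2:ℕ).factorial * (2:ℕ))) :=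
    le_trans (le_abs_self _) b2
  have hval : ((2:ℕ).succ : ℝ) / (((2:ℕ).factorial : ℝ) * (2:ℕ)) = 3/4 := by
    norm_num [Nat.factorial]
  rw [hval] at hb1 hb2
  rw [abs_of_nonneg h0] at hb1
  rw [abs_neg, abs_of_nonneg h0] at hb2
  nlinarith [sq_nonneg u]

-- L6 Chernoff
lemma chernoff (m : ℕ) (t : ℝ) (ht : 0 ≤ t) (htm : t ≤ 2*m) (hm : 1 ≤ m) :
    ∑ k ∈ (range (m+1)).filter (fun k : ℕ => t < 2*(k:ℝ) - m), ((m.choose k : ℝ))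
      ≤ 2^m * Real.exp (-(t^2)/(4*m)) := by
  have hm0 : (0:ℝ) < m := by exact_mod_cast hm
  set u : ℝ := t/(2*m) with hudef
  have hu0 : 0 ≤ u := by positivity
  have hu1 : u ≤ 1 := by rw [hudef, div_le_one (by positivity)]; linarith
  have hterm : ∀ k ∈ (range (m+1)).filter (fun k : ℕ => t < 2*(k:ℝ) - m),
      (m.choose k : ℝ) ≤ (m.choose k : ℝ) * Real.exp (u*(2*(k:ℝ) - m - t)) := by
    intro k hk
    have hcond := (Finset.mem_filter.mp hk).2
    have harg : 0 ≤ u*(2*(k:ℝ) - m - t) := mul_nonneg hu0 (by linarith)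
    nlinarith [Real.one_le_exp harg, Nat.cast_nonneg (α := ℝ) (m.choose k)]
  calc ∑ k ∈ (range (m+1)).filter (fun k : ℕ => t < 2*(k:ℝ) - m), ((m.choose k : ℝ))
      ≤ ∑ k ∈ (range (m+1)).filter (fun k : ℕ => t < 2*(k:ℝ) - m),
          (m.choose k : ℝ) * Real.exp (u*(2*(k:ℝ) - m - t)) := Finset.sum_le_sum hterm
    _ ≤ ∑ k ∈ range (m+1), (m.choose k : ℝ) * Real.exp (u*(2*(k:ℝ) - m - t)) := by
        apply Finset.sum_le_sum_of_subset_of_nonneg (Finset.filter_subset _ _)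
        intro k _ _
        positivity
    _ = ∑ k ∈ range (m+1), Real.exp (-(u*((m:ℝ)+t))) * ((Real.exp (2*u))^k * (m.choose k : ℝ)) := by
        refine Finset.sum_congr rfl (fun k _ => ?_)
        have hx : Real.exp (u*(2*(k:ℝ) - m - t))
            = Real.exp (-(u*((m:ℝ)+t))) * (Real.exp (2*u))^k := by
          rw [← Real.exp_nat_mul, ← Real.exp_add]
          congr 1
          ring
        rw [hx]; ring
    _ = Real.exp (-(u*((m:ℝ)+t))) * ∑ k ∈ range (m+1), (Real.exp (2*u))^k * (1:ℝ)^(m-k) * (m.choose k : ℝ) := by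
        rw [← Finset.mul_sum]
        refine congrArg _ (Finset.sum_congr rfl (fun k _ => by rw [one_pow, mul_one]))
    _ = Real.exp (-(u*((m:ℝ)+t))) * (Real.exp (2*u) + 1)^m := by rw [← add_pow]
    _ ≤ 2^m * Real.exp (-(t^2)/(4*m)) := ?_
  have hfac : Real.exp (2*u) + 1 ≤ 2 * Real.exp u * Real.exp (u^2) := by
    have h2 := exp_add_exp_neg_le u hu0 hu1
    have he : Real.exp (2*u) + 1 = Real.exp u * (Real.exp u + Real.exp (-u)) := by
      rw [mul_add, ← Real.exp_add, ← Real.exp_add,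
        show u + u = 2*u by ring, show u + -u = 0 by ring, Real.exp_zero]
    rw [he]
    have hq : 2 + 2*u^2 ≤ 2 * Real.exp (u^2) := by
      nlinarith [Real.add_one_le_exp (u^2)]
    calc Real.exp u * (Real.exp u + Real.exp (-u)) ≤ Real.exp u * (2 + 2*u^2) :=
          mul_le_mul_of_nonneg_left h2 (le_of_lt (Real.exp_pos u))
      _ ≤ Real.exp u * (2 * Real.exp (u^2)) :=
          mul_le_mul_of_nonneg_left hq (le_of_lt (Real.exp_pos u))
      _ = 2 * Real.exp u * Real.exp (u^2) := by ring
  have hpow : (Real.exp (2*u) + 1)^m ≤ (2 * Real.exp u * Real.exp (u^2))^m := by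
    apply pow_le_pow_left₀ (by positivity) hfac
  have hexp : (2 * Real.exp u * Real.exp (u^2))^m
      = 2^m * Real.exp (u*m + u^2*m) := by
    rw [mul_pow, mul_pow, ← Real.exp_nat_mul, ← Real.exp_nat_mul, mul_assoc, ← Real.exp_add]
    congr 1
    ring
  calc Real.exp (-(u*((m:ℝ)+t))) * (Real.exp (2*u) + 1)^m
      ≤ Real.exp (-(u*((m:ℝ)+t))) * (2^m * Real.exp (u*m + u^2*m)) := by
        rw [← hexp]
        exact mul_le_mul_of_nonneg_left hpow (le_of_lt (Real.exp_pos _))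
    _ = 2^m * Real.exp (u*m + u^2*m - u*((m:ℝ)+t)) := by
        rw [mul_comm (Real.exp (-(u*((m:ℝ)+t)))) _, mul_assoc, ← Real.exp_add]
        congr 1
    _ = 2^m * Real.exp (-(t^2)/(4*m)) := by
        congr 1
        apply congrArg
        rw [hudef]
        field_simp
        ring

lemma log_le_sqrt (n : ℕ) (hn : 1024 ≤ n) : Real.log ((n:ℝ)+1) ≤ Real.sqrt n := by
  have hx : (1024:ℝ) ≤ n := by exact_mod_cast hn
  have hn1 : (0:ℝ) < (n:ℝ)+1 := by positivity
  set a := Real.sqrt (Real.sqrt ((n:ℝ)+1)) with ha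
  have ha0 : 0 < a := by
    apply Real.sqrt_pos.mpr
    exact Real.sqrt_pos.mpr hn1
  have hlog : Real.log ((n:ℝ)+1) = 4 * Real.log a := by
    rw [ha, Real.log_sqrt (Real.sqrt_nonneg _), Real.log_sqrt (le_of_lt hn1)]
    ring
  have hla : Real.log a ≤ a := le_trans (Real.log_le_sub_one_of_pos ha0) (by linarith)
  have hsq : a^2 = Real.sqrt ((n:ℝ)+1) := Real.sq_sqrt (Real.sqrt_nonneg _)
  have hs16 : Real.sqrt ((n:ℝ)+1) ≤ (n:ℝ)/16 := by
    have h1 : ((n:ℝ)+1) ≤ ((n:ℝ)/16)^2 := by nlinarith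
    calc Real.sqrt ((n:ℝ)+1) ≤ Real.sqrt (((n:ℝ)/16)^2) := Real.sqrt_le_sqrt h1
      _ = (n:ℝ)/16 := Real.sqrt_sq (by positivity)
  have h4a : 4*a ≤ Real.sqrt n := by
    have h1 : (4*a)^2 ≤ (n:ℝ) := by
      have : (4*a)^2 = 16 * a^2 := by ring
      rw [this, hsq]
      linarith
    calc 4*a = Real.sqrt ((4*a)^2) := (Real.sqrt_sq (by positivity)).symm
      _ ≤ Real.sqrt n := Real.sqrt_le_sqrt h1
  calc Real.log ((n:ℝ)+1) = 4 * Real.log a := hlog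
    _ ≤ 4 * a := by linarith
    _ ≤ Real.sqrt n := h4a

lemma mulA {c q p x : ℝ} (hp : 0 < p) (h : c ≤ q) (hpq : p * q = x) : c * p ≤ x := by
  calc c * p ≤ q * p := mul_le_mul_of_nonneg_right h hp.le
    _ = x := by rw [mul_comm]; exact hpq

lemma aux_step3 {yv Kv xv : ℝ} (hy0 : 0 ≤ yv) (hy14 : yv ≤ 1/4) (hK0 : 0 ≤ Kv)
    (h2K : 2*Kv ≤ xv*(1+yv)) (hx : 0 < xv) : (1-2*yv)*Kv ≤ xv - Kv + 1 := by
  nlinarith [sq_nonneg yv, mul_nonneg hy0 hK0]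

lemma aux_h4 {τv tv : ℝ} (h25 : 25 ≤ τv) (ht : tv ≤ τv/2+3) (ht0 : 0 ≤ tv) :
    4*(τv+5)*tv ≤ 3*τv^2 := by nlinarith

lemma aux_D {c : ℝ} (hc : 0 < c) : 3*c^2 + 1 ≤ (5*c+3)^2/8 := by nlinarith

/-- For all (sufficiently large) `n`, all `τ` with `c₁√n ≤ τ ≤ c₂ n^{3/4}`, and all
`ℓ ≤ c₃√n`, the tail probability `P_{x∼{±1}^{n+ℓ}}[Σ x_i > τ]` is at most a constant
multiple of `P_{x∼{±1}^n}[Σ x_i > τ]`. -/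
theorem stmt_12 (c₁ c₂ c₃ : ℝ) (h₁ : 0 < c₁) (h₂ : 0 < c₂) (h₃ : 0 < c₃) :
    ∃ C : ℝ, 0 < C ∧ ∃ N : ℕ, ∀ n ℓ : ℕ, N ≤ n → ∀ τ : ℝ,
      c₁ * Real.sqrt n ≤ τ → τ ≤ c₂ * (n : ℝ) ^ ((3 : ℝ) / 4) →
      (ℓ : ℝ) ≤ c₃ * Real.sqrt n →
      tailProb (n + ℓ) τ ≤ C * tailProb n τ := by

  classical
  set D : ℝ := 5*c₂ + 3 with hD
  set E : ℝ := 2*(c₃/2+1)*(D+1)^2 with hE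
  have hD0 : 0 < D := by rw [hD]; positivity
  have hE0 : 0 < E := by rw [hE]; positivity
  clear_value D E
  refine ⟨2*Real.exp E + 1, by positivity, ?_⟩
  have t2 : Filter.Tendsto (fun n : ℕ => ((n:ℝ))^((1:ℝ)/4)) Filter.atTop Filter.atTop :=
    (tendsto_rpow_atTop (by norm_num)).comp tendsto_natCast_atTop_atTop
  have t1 : Filter.Tendsto (fun n : ℕ => Real.sqrt (n:ℝ)) Filter.atTop Filter.atTop := by
    have h := (tendsto_rpow_atTop (by norm_num : (0:ℝ) < 1/2)).comp
      (tendsto_natCast_atTop_atTop (R := ℝ))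
    refine h.congr (fun n => ?_)
    exact (Real.sqrt_eq_rpow _).symm
  have ev : ∀ᶠ n : ℕ in Filter.atTop,
      (25/c₁ ≤ Real.sqrt n ∧ c₃ ≤ Real.sqrt n ∧ 8*c₂ ≤ ((n:ℝ))^((1:ℝ)/4)
        ∧ 2*(D+1) ≤ ((n:ℝ))^((1:ℝ)/4) ∧ 1024 ≤ n) := by
    filter_upwards [t1.eventually_ge_atTop (25/c₁), t1.eventually_ge_atTop c₃,
      t2.eventually_ge_atTop (8*c₂), t2.eventually_ge_atTop (2*(D+1)),
      Filter.eventually_ge_atTop 1024] with n h1 h2 h3 h4 h5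
    exact ⟨h1, h2, h3, h4, h5⟩
  obtain ⟨N, hN⟩ := Filter.eventually_atTop.mp ev
  refine ⟨N, ?_⟩
  intro n ℓ hn τ hτ1 hτ2 hℓ
  obtain ⟨e1, e2, e3, e4, e5⟩ := hN n hn
  have hn1 : 1 ≤ n := le_trans (by norm_num) e5
  have hx0 : (0:ℝ) < (n:ℝ) := by exact_mod_cast Nat.lt_of_lt_of_le Nat.zero_lt_one hn1
  have hx1024 : (1024:ℝ) ≤ (n:ℝ) := by exact_mod_cast e5
  set x : ℝ := (n:ℝ) with hxdef
  set s : ℝ := Real.sqrt n with hsdef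
  set q4 : ℝ := ((n:ℝ))^((1:ℝ)/4) with hq4def
  set p34 : ℝ := ((n:ℝ))^((3:ℝ)/4) with hp34def
  have hs0 : 0 < s := Real.sqrt_pos.mpr hx0
  have hq40 : 0 < q4 := Real.rpow_pos_of_pos hx0 _
  have hp340 : 0 < p34 := Real.rpow_pos_of_pos hx0 _
  have hss : s * s = x := Real.mul_self_sqrt (le_of_lt hx0)
  have hpq : p34 * q4 = x := by
    rw [hp34def, hq4def, ← Real.rpow_add hx0]; norm_num
  have hp34sq : p34 * p34 = x * s := by
    have h1 : p34 * p34 = x^((3:ℝ)/2) := by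
      rw [hp34def, ← Real.rpow_add hx0]; norm_num
    have h2 : x * s = x^((3:ℝ)/2) := by
      rw [hsdef, Real.sqrt_eq_rpow]
      nth_rewrite 1 [← Real.rpow_one x]
      rw [← Real.rpow_add hx0]; norm_num
    rw [h1, h2]
  have hs1 : 1 ≤ s := by
    rw [hsdef, show (1:ℝ) = Real.sqrt 1 from (Real.sqrt_one).symm]
    exact Real.sqrt_le_sqrt (by exact_mod_cast hn1)
  have hn1r : (1:ℝ) ≤ (n:ℝ) := by exact_mod_cast hn1
  have hq41 : 1 ≤ q4 := by
    rw [hq4def]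
    calc (1:ℝ) = (1:ℝ)^((1:ℝ)/4) := (Real.one_rpow _).symm
      _ ≤ ((n:ℝ))^((1:ℝ)/4) := Real.rpow_le_rpow (by norm_num) hn1r (by norm_num)
  have hp341 : 1 ≤ p34 := by
    rw [hp34def]
    calc (1:ℝ) = (1:ℝ)^((3:ℝ)/4) := (Real.one_rpow _).symm
      _ ≤ ((n:ℝ))^((3:ℝ)/4) := Real.rpow_le_rpow (by norm_num) hn1r (by norm_num)
  clear_value x s q4 p34
  -- τ bounds
  have hτ25 : 25 ≤ τ := by
    have h := mul_le_mul_of_nonneg_left e1 (le_of_lt h₁)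
    rw [mul_div_cancel₀ _ (ne_of_gt h₁)] at h
    linarith
  have hτ0 : 0 < τ := by linarith
  have hc2p : c₂ * p34 ≤ x/8 := by
    have h8 : (8*c₂) * p34 ≤ x := mulA hp340 e3 hpq
    linarith
  have hτx8 : τ ≤ x/8 := le_trans hτ2 hc2p
  have hτ5 : τ + 5 ≤ x/4 := by linarith
  have hDp : (D+1)*p34 ≤ x/2 := by
    have h2 : (2*(D+1)) * p34 ≤ x := mulA hp340 e4 hpq
    have h3 : (2*(D+1))*p34 = 2*((D+1)*p34) := by ring
    linarith [h3.symm.trans_le h2]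
  have hℓs : (ℓ:ℝ) ≤ c₃ * s := hℓ
  have hℓx : (ℓ:ℝ) ≤ x := by
    have h2 : c₃ * s ≤ x := mulA hs0 e2 hss
    linarith
  have hm2x : ((n+ℓ:ℕ):ℝ) ≤ 2*x := by push_cast; linarith
  have hmx : x ≤ ((n+ℓ:ℕ):ℝ) := by
    push_cast
    linarith [Nat.cast_nonneg (α := ℝ) ℓ]
  have hm1 : 1 ≤ n + ℓ := le_trans hn1 (Nat.le_add_right _ _)
  set d₀ : ℝ := D * p34 with hd₀def
  have hd₀0 : 0 < d₀ := by positivity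
  have hDexp : (D+1)*p34 = D*p34 + p34 := by ring
  have hd₀x : d₀ + 1 ≤ x/2 := by rw [hd₀def]; linarith
  have hd₀2m : d₀ ≤ 2*((n+ℓ:ℕ):ℝ) := by
    have hm0 : (0:ℝ) ≤ ((n+ℓ:ℕ):ℝ) := Nat.cast_nonneg _
    linarith
  -- the sums
  rw [tailProb_eq, tailProb_eq]
  set F : Finset ℕ := (range ((n+ℓ)+1)).filter
    (fun k : ℕ => τ < 2*(k:ℝ) - ((n+ℓ:ℕ):ℝ)) with hFdef
  set G : Finset ℕ := (range (n+1)).filter (fun k : ℕ => τ < 2*(k:ℝ) - (n:ℝ)) with hGdef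
  set SB : ℝ := ∑ k ∈ G, ((n.choose k : ℕ) : ℝ) with hSBdef
  have hSB0 : 0 ≤ SB := Finset.sum_nonneg (fun k _ => Nat.cast_nonneg _)
  set p : ℕ → Prop := fun k => 2*(k:ℝ) - ((n+ℓ:ℕ):ℝ) ≤ d₀ with hpdef
  have hsplit := Finset.sum_filter_add_sum_filter_not F p
    (fun k => (((n+ℓ).choose k : ℕ):ℝ))
  set h : ℕ := ℓ/2 with hhdef
  have hhℓ : 2*h ≤ ℓ := by omega
  have hhℓ1 : (ℓ:ℝ) - 2*(h:ℝ) ≤ 1 := by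
    have : ℓ - 2*h ≤ 1 := by omega
    have h2 : ((ℓ - 2*h : ℕ):ℝ) = (ℓ:ℝ) - 2*(h:ℝ) := by
      rw [Nat.cast_sub hhℓ]; push_cast; ring
    rw [← h2]; exact_mod_cast this
  have hhs : (h:ℝ) + 1 ≤ (c₃/2+1)*s := by
    have h1 : (h:ℝ) ≤ (ℓ:ℝ)/2 := by
      have : (2*h:ℕ) ≤ ℓ := hhℓ
      have := (Nat.cast_le (α := ℝ)).mpr this
      push_cast at this; linarith
    have hexp : (c₃/2+1)*s = (c₃/2)*s + s := by ring
    have hc3s : (c₃/2)*s = (c₃*s)/2 := by ring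
    linarith
  -- main per-element facts on the central part
  have hmain : ∀ kt ∈ F.filter p, h ≤ kt ∧ (kt - h) ∈ G ∧
      ((((n+ℓ).choose kt : ℕ):ℝ) ≤ 2^ℓ * (2*Real.exp E) * ((n.choose (kt - h) : ℕ):ℝ)) := by
    intro kt hkt
    obtain ⟨hktF, hktp⟩ := Finset.mem_filter.mp hkt
    obtain ⟨hktr, hktτ⟩ := Finset.mem_filter.mp hktF
    have hktm : kt ≤ n + ℓ := by
      have := Finset.mem_range.mp hktr; omega
    have hmcast : ((n+ℓ:ℕ):ℝ) = x + ℓ := by rw [hxdef]; push_cast; ring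
    have hktτ' : τ < 2*(kt:ℝ) - (x + (ℓ:ℝ)) := by rw [← hmcast]; exact hktτ
    have hktp' : 2*(kt:ℝ) - (x + (ℓ:ℝ)) ≤ d₀ := by rw [← hmcast]; exact hktp
    clear hktτ hktp
    have hktτ := hktτ'
    have hktp := hktp'
    have h2hℓ : 2*(h:ℝ) ≤ (ℓ:ℝ) := by exact_mod_cast hhℓ
    -- h < kt
    have hhkt : h < kt := by
      have hr : 2*(kt:ℝ) > 2*(h:ℝ) := by linarith [h2hℓ, Nat.cast_nonneg (α := ℝ) ℓ]
      have : (h:ℝ) < (kt:ℝ) := by linarith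
      exact_mod_cast this
    set k : ℕ := kt - h with hkdef
    have hkcast : (k:ℝ) = (kt:ℝ) - h := by
      rw [hkdef, Nat.cast_sub (le_of_lt hhkt)]
    have hnk : n ≤ 2*k := by
      have hr : (n:ℝ) < 2*(k:ℝ) := by
        rw [hkcast]
        have : (2:ℝ)*(kt:ℝ) > x + (ℓ:ℝ) + τ := by linarith
        linarith [hhℓ1, hτ0]
      have : (n:ℝ) < ((2*k : ℕ):ℝ) := by push_cast; linarith
      exact_mod_cast le_of_lt (by exact_mod_cast this : n < 2*k)
    have hd2 : 2*(k:ℝ) - x ≤ d₀ + 1 := by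
      rw [hkcast]; linarith [hhℓ1]
    have hkn : k ≤ n := by
      have hr : 2*(k:ℝ) ≤ 2*x := by linarith
      have : (2*k:ℕ) ≤ 2*n := by exact_mod_cast (by push_cast; linarith : ((2*k:ℕ):ℝ) ≤ ((2*n:ℕ):ℝ))
      omega
    have hd1 : 0 < 2*(k:ℝ) - x := by
      have : (n:ℝ) < 2*(k:ℝ) := by
        rw [hkcast]; linarith [hhℓ1, hτ0]
      linarith
    have hdsq : (2*(k:ℝ) - (n:ℝ))^2 ≤ (n:ℝ)^2/2 := by
      have hle : 2*(k:ℝ) - x ≤ x/2 := by linarith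
      have hsq : (2*(k:ℝ) - x)^2 ≤ (x/2)^2 := sq_le_sq' (by linarith) hle
      have he : (x/2)^2 = x^2/4 := by ring
      have hx2 : 0 ≤ x^2 := sq_nonneg x
      calc (2*(k:ℝ) - (n:ℝ))^2 = (2*(k:ℝ) - x)^2 := by rw [hxdef]
        _ ≤ x^2/4 := by linarith
        _ ≤ (n:ℝ)^2/2 := by rw [← hxdef]; linarith
    have hcs := choose_shift n k ℓ hkn hnk hn1 hdsq
    have hkh : k + ℓ/2 = kt := by omega
    rw [hkh] at hcs
    have hdbound : (2*(k:ℝ) - (n:ℝ))^2 ≤ (D+1)^2*(x*s) := by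
      have h1 : 2*(k:ℝ) - x ≤ (D+1)*p34 := by linarith
      have h0 : (0:ℝ) ≤ (D+1)*p34 := by positivity
      have hsq : (2*(k:ℝ) - x)^2 ≤ ((D+1)*p34)^2 := sq_le_sq' (by linarith) h1
      have he : ((D+1)*p34)^2 = (D+1)^2*(x*s) := by
        linear_combination (D+1)^2 * hp34sq
      calc (2*(k:ℝ) - (n:ℝ))^2 = (2*(k:ℝ) - x)^2 := by rw [hxdef]
        _ ≤ ((D+1)*p34)^2 := hsq
        _ = (D+1)^2*(x*s) := he
    have hargE : 2*((2*(k:ℝ)-(n:ℝ))^2/(n:ℝ)^2) * ((ℓ/2 : ℕ)+1) ≤ E := by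
      rw [show 2*((2*(k:ℝ)-(n:ℝ))^2/(n:ℝ)^2) * (((ℓ/2 : ℕ):ℝ)+1)
          = (2*(2*(k:ℝ)-(n:ℝ))^2*(((ℓ/2:ℕ):ℝ)+1))/x^2 from by rw [hxdef]; ring,
        div_le_iff₀ (pow_pos hx0 2)]
      have hA : (2*(k:ℝ)-(n:ℝ))^2 * (((ℓ/2:ℕ):ℝ)+1) ≤ ((D+1)^2*(x*s))*((c₃/2+1)*s) := by
        apply mul_le_mul hdbound hhs (by positivity) (by positivity)
      have hB : ((D+1)^2*(x*s))*((c₃/2+1)*s) = (E/2) * x^2 := by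
        rw [hE]
        linear_combination ((c₃/2+1)*(D+1)^2*x) * hss
      linarith
    have hfinal : ((((n+ℓ)).choose kt : ℕ):ℝ)
        ≤ 2^ℓ * (2*Real.exp E) * ((n.choose k : ℕ):ℝ) := by
      refine le_trans hcs ?_
      have hexp : Real.exp (2*((2*(k:ℝ)-(n:ℝ))^2/(n:ℝ)^2) * ((ℓ/2 : ℕ)+1)) ≤ Real.exp E :=
        Real.exp_le_exp.mpr hargE
      have : (2:ℝ)^ℓ * (2*Real.exp (2*((2*(k:ℝ)-(n:ℝ))^2/(n:ℝ)^2) * ((ℓ/2 : ℕ)+1)))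
          ≤ 2^ℓ * (2*Real.exp E) := by
        apply mul_le_mul_of_nonneg_left (by linarith) (by positivity)
      exact mul_le_mul_of_nonneg_right this (Nat.cast_nonneg _)
    refine ⟨le_of_lt hhkt, ?_, hfinal⟩
    rw [hGdef, Finset.mem_filter, Finset.mem_range]
    exact ⟨by omega, by linarith [hd1]⟩
  -- central sum bound
  have hcent : ∑ kt ∈ F.filter p, (((n+ℓ).choose kt : ℕ):ℝ)
      ≤ 2^ℓ * (2*Real.exp E) * SB := by
    calc ∑ kt ∈ F.filter p, (((n+ℓ).choose kt : ℕ):ℝ)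
        ≤ ∑ kt ∈ F.filter p, 2^ℓ * (2*Real.exp E) * ((n.choose (kt - h) : ℕ):ℝ) :=
          Finset.sum_le_sum (fun kt hkt => (hmain kt hkt).2.2)
      _ = 2^ℓ * (2*Real.exp E) * ∑ kt ∈ F.filter p, ((n.choose (kt - h) : ℕ):ℝ) := by
          rw [Finset.mul_sum]
      _ ≤ 2^ℓ * (2*Real.exp E) * SB := by
          apply mul_le_mul_of_nonneg_left _ (by positivity)
          have hinj : ∀ a ∈ F.filter p, ∀ b ∈ F.filter p, a - h = b - h → a = b := by
            intro a ha b hb hab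
            have h1 := (hmain a ha).1
            have h2 := (hmain b hb).1
            omega
          have himg : ∑ kt ∈ F.filter p, ((n.choose (kt - h) : ℕ):ℝ)
              = ∑ j ∈ (F.filter p).image (fun kt => kt - h), ((n.choose j : ℕ):ℝ) :=
            (Finset.sum_image (f := fun j => ((n.choose j : ℕ):ℝ)) hinj).symm
          rw [himg]
          apply Finset.sum_le_sum_of_subset_of_nonneg
          · intro k hk
            obtain ⟨kt, hkt, hkeq⟩ := Finset.mem_image.mp hk
            rw [← hkeq]
            exact (hmain kt hkt).2.1
          · intro k _ _
            exact Nat.cast_nonneg _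
  -- far sum bound
  have hfar : ∑ kt ∈ F.filter (fun k => ¬ p k), (((n+ℓ).choose kt : ℕ):ℝ)
      ≤ 2^(n+ℓ) * Real.exp (-(d₀^2)/(4*((n+ℓ:ℕ):ℝ))) := by
    have hsub : F.filter (fun k => ¬ p k)
        ⊆ (range ((n+ℓ)+1)).filter (fun k : ℕ => d₀ < 2*(k:ℝ) - ((n+ℓ:ℕ):ℝ)) := by
      intro kt hkt
      obtain ⟨hktF, hktnp⟩ := Finset.mem_filter.mp hkt
      obtain ⟨hktr, _⟩ := Finset.mem_filter.mp hktF
      rw [Finset.mem_filter]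
      refine ⟨hktr, ?_⟩
      exact not_le.mp hktnp
    calc ∑ kt ∈ F.filter (fun k => ¬ p k), (((n+ℓ).choose kt : ℕ):ℝ)
        ≤ ∑ kt ∈ (range ((n+ℓ)+1)).filter (fun k : ℕ => d₀ < 2*(k:ℝ) - ((n+ℓ:ℕ):ℝ)),
            (((n+ℓ).choose kt : ℕ):ℝ) :=
          Finset.sum_le_sum_of_subset_of_nonneg hsub (fun kk _ _ => Nat.cast_nonneg _)
      _ ≤ 2^(n+ℓ) * Real.exp (-(d₀^2)/(4*((n+ℓ:ℕ):ℝ))) :=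
          chernoff (n+ℓ) d₀ (le_of_lt hd₀0) hd₀2m hm1
  -- lower bound on SB
  set a : ℕ := Nat.ceil τ with hadef
  have haτ : τ ≤ (a:ℝ) := Nat.le_ceil τ
  have haτ2 : (a:ℝ) ≤ τ + 1 := by
    have := Nat.ceil_lt_add_one (le_of_lt hτ0)
    linarith
  set t₀ : ℕ := a/2 + 2 with ht₀def
  set K : ℕ := n/2 + t₀ with hKdef
  have hKlow : τ + 2 ≤ 2*(K:ℝ) - x := by
    have hnat : n + a + 2 ≤ 2*K := by omega
    have := (Nat.cast_le (α := ℝ)).mpr hnat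
    push_cast at this
    linarith
  have hKhigh : 2*(K:ℝ) - x ≤ τ + 5 := by
    have hnat : 2*K ≤ n + a + 4 := by omega
    have := (Nat.cast_le (α := ℝ)).mpr hnat
    push_cast at this
    linarith
  have hKn : K ≤ n := by
    have hr : 2*(K:ℝ) ≤ 2*x := by linarith
    have : (2*K:ℕ) ≤ 2*n := by exact_mod_cast (by push_cast; linarith : ((2*K:ℕ):ℝ) ≤ ((2*n:ℕ):ℝ))
    omega
  have hKG : K ∈ G := by
    rw [hGdef, Finset.mem_filter, Finset.mem_range]
    exact ⟨by omega, by linarith⟩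
  set y : ℝ := (τ+5)/x with hydef
  have hy0 : 0 < y := by positivity
  have hyx : y * x = τ + 5 := by rw [hydef]; field_simp
  have hy14 : y ≤ 1/4 := by rw [hydef, div_le_iff₀ hx0]; linarith
  set ρ : ℝ := Real.exp (-(4*y)) with hρdef
  have hρ0 : 0 ≤ ρ := le_of_lt (Real.exp_pos _)
  have hρ1 : ρ ≤ 1 - 2*y := by
    have h := exp_neg_two_le (x := 2*y) (by positivity) (by linarith)
    rw [hρdef, show -(4*y) = -(2*(2*y)) from by ring]
    exact h
  have hhyp : ∀ j : ℕ, n/2 ≤ j → j < n/2 + t₀ → ρ * ((j:ℝ)+1) ≤ (n:ℝ) - j := by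
    intro j hj1 hj2
    have hjK : j + 1 ≤ K := by omega
    have hJK : (j:ℝ) + 1 ≤ (K:ℝ) := by exact_mod_cast hjK
    have hstep1 : ρ*((j:ℝ)+1) ≤ (1-2*y)*((j:ℝ)+1) :=
      mul_le_mul_of_nonneg_right hρ1 (by positivity)
    have hstep2 : (1-2*y)*((j:ℝ)+1) ≤ (1-2*y)*K :=
      mul_le_mul_of_nonneg_left hJK (by linarith)
    have h2K : 2*(K:ℝ) ≤ x*(1+y) := by
      have he : x*(1+y) = x + y*x := by ring
      linarith [hyx, hKhigh]
    have hstep3 : (1-2*y)*(K:ℝ) ≤ x - K + 1 :=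
      aux_step3 (le_of_lt hy0) hy14 (Nat.cast_nonneg _) h2K hx0
    have hstep4 : x - (K:ℝ) + 1 ≤ x - j := by linarith
    calc ρ*((j:ℝ)+1) ≤ (1-2*y)*((j:ℝ)+1) := hstep1
      _ ≤ (1-2*y)*K := hstep2
      _ ≤ x - K + 1 := hstep3
      _ ≤ x - j := hstep4
      _ = (n:ℝ) - j := by rw [hxdef]
  have hgeom := choose_geom n (n/2) ρ hρ0 t₀ hhyp
  have hρt : Real.exp (-(3*τ^2/x)) ≤ ρ^t₀ := by
    rw [hρdef, ← Real.exp_nat_mul]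
    apply Real.exp_le_exp.mpr
    have ht₀r : (t₀:ℝ) ≤ τ/2 + 3 := by
      have h1 : ((a/2:ℕ):ℝ) ≤ (a:ℝ)/2 := by
        have : (2*(a/2):ℕ) ≤ a := by omega
        have := (Nat.cast_le (α := ℝ)).mpr this
        push_cast at this
        linarith
      rw [ht₀def]
      push_cast
      linarith
    have hexpand : (t₀:ℝ) * -(4*y) = -(4*y*t₀) := by ring
    rw [hexpand]
    have hkey : 4*y*(t₀:ℝ) ≤ 3*τ^2/x := by
      have h4 : 4*(τ+5)*(t₀:ℝ) ≤ 3*τ^2 := aux_h4 hτ25 ht₀r (Nat.cast_nonneg _)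
      have he : 4*y*(t₀:ℝ) = 4*(τ+5)*(t₀:ℝ)/x := by rw [hydef]; ring
      rw [he]
      gcongr
    linarith
  have hmid := middle_lower n
  have hSBlow : 2^n * Real.exp (-(3*τ^2/x)) / (x+1) ≤ SB := by
    have hchoose : (2:ℝ)^n/(x+1) ≤ (n.choose (n/2) : ℝ) := by
      rw [div_le_iff₀ (by positivity)]
      calc (2:ℝ)^n ≤ (x+1) * (n.choose (n/2)) := by rw [hxdef]; exact hmid
        _ = (n.choose (n/2) : ℝ) * (x+1) := by ring
    have hCK : 2^n * Real.exp (-(3*τ^2/x)) / (x+1) ≤ ((n.choose K : ℕ):ℝ) := by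
      have h1 : (2:ℝ)^n * Real.exp (-(3*τ^2/x)) / (x+1)
          ≤ (n.choose (n/2) : ℝ) * ρ^t₀ := by
        have := mul_le_mul hchoose hρt (le_of_lt (Real.exp_pos _)) (Nat.cast_nonneg _)
        calc (2:ℝ)^n * Real.exp (-(3*τ^2/x)) / (x+1)
            = ((2:ℝ)^n/(x+1)) * Real.exp (-(3*τ^2/x)) := by ring
          _ ≤ (n.choose (n/2) : ℝ) * ρ^t₀ := this
      exact le_trans h1 (by rw [hKdef]; exact hgeom)
    refine le_trans hCK ?_
    exact Finset.single_le_sum (f := fun k => ((n.choose k : ℕ):ℝ))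
      (fun k _ => Nat.cast_nonneg _) hKG
  -- far ≤ 2^ℓ * SB
  have hτsq : 3*τ^2/x ≤ 3*c₂^2*s := by
    have h1 : τ^2 ≤ c₂^2*(x*s) := by
      have h0 : (0:ℝ) ≤ c₂*p34 := by positivity
      have hsq : τ^2 ≤ (c₂*p34)^2 := sq_le_sq' (by linarith) hτ2
      have he : (c₂*p34)^2 = c₂^2*(x*s) := by linear_combination c₂^2 * hp34sq
      linarith
    rw [div_le_iff₀ hx0]
    have he2 : 3*c₂^2*s*x = 3*(c₂^2*(x*s)) := by ring
    linarith
  have hd₀sq : D^2*s/8 ≤ d₀^2/(4*((n+ℓ:ℕ):ℝ)) := by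
    have h1 : d₀^2 = D^2*(x*s) := by
      rw [hd₀def]; linear_combination D^2 * hp34sq
    rw [h1, le_div_iff₀ (by positivity)]
    have h2 : 4*((n+ℓ:ℕ):ℝ) ≤ 8*x := by linarith
    calc D^2*s/8 * (4*((n+ℓ:ℕ):ℝ)) ≤ D^2*s/8 * (8*x) := by
          apply mul_le_mul_of_nonneg_left h2 (by positivity)
      _ = D^2*(x*s) := by ring
  have hDbig : 3*c₂^2 + 1 ≤ D^2/8 := by rw [hD]; exact aux_D h₂
  have hexpdiff : x + 1 ≤ Real.exp (d₀^2/(4*((n+ℓ:ℕ):ℝ)) - 3*τ^2/x) := by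
    have hlog := log_le_sqrt n e5
    have h1 : Real.log (x+1) ≤ s := by rw [hxdef, hsdef]; exact hlog
    have h2 : s ≤ d₀^2/(4*((n+ℓ:ℕ):ℝ)) - 3*τ^2/x := by
      have : (3*c₂^2+1)*s ≤ D^2/8*s := mul_le_mul_of_nonneg_right hDbig (le_of_lt hs0)
      have hD8 : D^2/8*s = D^2*s/8 := by ring
      have hexp2 : (3*c₂^2+1)*s = 3*c₂^2*s + s := by ring
      linarith
    calc x + 1 = Real.exp (Real.log (x+1)) := (Real.exp_log (by positivity)).symm
      _ ≤ Real.exp (d₀^2/(4*((n+ℓ:ℕ):ℝ)) - 3*τ^2/x) := Real.exp_le_exp.mpr (by linarith)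
  have hfarSB : (2:ℝ)^(n+ℓ) * Real.exp (-(d₀^2)/(4*((n+ℓ:ℕ):ℝ))) ≤ 2^ℓ * SB := by
    have hkey : Real.exp (-(d₀^2)/(4*((n+ℓ:ℕ):ℝ))) ≤ Real.exp (-(3*τ^2/x))/(x+1) := by
      rw [le_div_iff₀ (by positivity : (0:ℝ) < x+1)]
      have hmm := mul_le_mul_of_nonneg_right hexpdiff
        (le_of_lt (Real.exp_pos (-(d₀^2)/(4*((n+ℓ:ℕ):ℝ)))))
      have h1 : Real.exp (-(d₀^2)/(4*((n+ℓ:ℕ):ℝ))) * (x+1)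
          ≤ Real.exp (d₀^2/(4*((n+ℓ:ℕ):ℝ)) - 3*τ^2/x)
            * Real.exp (-(d₀^2)/(4*((n+ℓ:ℕ):ℝ))) := by linarith [hmm]
      refine le_trans h1 ?_
      rw [← Real.exp_add]
      apply Real.exp_le_exp.mpr
      have : -(d₀^2)/(4*((n+ℓ:ℕ):ℝ)) = -(d₀^2/(4*((n+ℓ:ℕ):ℝ))) := by ring
      rw [this]
      ring_nf
      linarith
    have h2p : (2:ℝ)^(n+ℓ) = 2^n * 2^ℓ := pow_add 2 n ℓ
    calc (2:ℝ)^(n+ℓ) * Real.exp (-(d₀^2)/(4*((n+ℓ:ℕ):ℝ)))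
        ≤ (2:ℝ)^(n+ℓ) * (Real.exp (-(3*τ^2/x))/(x+1)) := by
          apply mul_le_mul_of_nonneg_left hkey (by positivity)
      _ = 2^ℓ * (2^n * Real.exp (-(3*τ^2/x))/(x+1)) := by rw [h2p]; ring
      _ ≤ 2^ℓ * SB := by
          apply mul_le_mul_of_nonneg_left hSBlow (by positivity)
  -- combine
  have hSA : ∑ k ∈ F, (((n+ℓ).choose k : ℕ):ℝ) ≤ 2^ℓ * (2*Real.exp E + 1) * SB := by
    rw [← hsplit]
    calc ∑ kt ∈ F.filter p, (((n+ℓ).choose kt : ℕ):ℝ)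
          + ∑ kt ∈ F.filter (fun k => ¬ p k), (((n+ℓ).choose kt : ℕ):ℝ)
        ≤ 2^ℓ * (2*Real.exp E) * SB + 2^(n+ℓ) * Real.exp (-(d₀^2)/(4*((n+ℓ:ℕ):ℝ))) := by
          exact add_le_add hcent hfar
      _ ≤ 2^ℓ * (2*Real.exp E) * SB + 2^ℓ * SB := by linarith [hfarSB]
      _ = 2^ℓ * (2*Real.exp E + 1) * SB := by ring
  rw [div_le_iff₀ (by positivity : (0:ℝ) < 2^(n+ℓ))]
  have h2p : (2:ℝ)^(n+ℓ) = 2^n * 2^ℓ := pow_add 2 n ℓ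
  calc ∑ k ∈ F, (((n+ℓ).choose k : ℕ):ℝ) ≤ 2^ℓ * (2*Real.exp E + 1) * SB := hSA
    _ = (2*Real.exp E + 1) * (SB / 2^n) * 2^(n+ℓ) := by
        rw [h2p]
        field_simp
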